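/- The offsets of the update sequence correspond to 0-bits: let i be positive with m = rmb i, and let u 0 = i, u (j+1) = u j + 2^(rmb (u j)). Then the first offset u 1 - u 0 equals 2^m, and for j ≥ 1, the offset u (j+1) - u j equals 2^{b}, where b is the position of the j-th 0-bit of i among positions strictly greater than m (counting from the least significant such 0-bit), provided the sequence has not yet terminated. -/

import Mathlib

/-- Position of the least significant set bit of a positive natural. -/
def rmb (i : ℕ) : ℕ := padicValNat 2 i

/-- Number of 1-bits in the binary representation. -/
def popcount (i : ℕ) : ℕ := (Nat.bits i).count true

/-- One step of the sum sequence: clear the lowest set bit. -/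
def sumStep (x : ℕ) : ℕ := x - 2 ^ rmb x

/-- The sum sequence of `i`. -/
def sumSeq (i j : ℕ) : ℕ := sumStep^[j] i

/-- One step of the update sequence. -/
def updStep (x : ℕ) : ℕ := x + 2 ^ rmb x

/-- The update sequence of `i`. -/
def updSeq (i j : ℕ) : ℕ := updStep^[j] i

/-- The Fenwick array of `A`: entry `k` sums `A` over `(k - 2^(rmb k), k]`. -/
def fenwick (A : ℕ → ℤ) (k : ℕ) : ℤ := ∑ m ∈ Finset.Ioc (k - 2 ^ rmb k) k, A m

private lemma testBit_div_pow (x n k : ℕ) : (x / 2 ^ n).testBit k = x.testBit (n + k) := by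
  simp [Nat.testBit_eq_decide_div_mod_eq, Nat.div_div_eq_div_mul, ← pow_add]

private lemma rmb_pow_mul (n o : ℕ) (ho : Odd o) : rmb (2 ^ n * o) = n := by
  haveI := Fact.mk Nat.prime_two
  have ho0 : o ≠ 0 := by rintro rfl; simp [Nat.odd_iff] at ho
  have h2 : ¬ (2 ∣ o) := by rw [Nat.odd_iff] at ho; omega
  unfold rmb
  rw [padicValNat.mul (by positivity) ho0, padicValNat.prime_pow,
    padicValNat.eq_zero_of_not_dvd h2]
  omega

theorem updSeq_offsets (i : ℕ) (hi : 0 < i) :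
    updSeq i 1 - updSeq i 0 = 2 ^ rmb i ∧
      ∀ j, 1 ≤ j →
        updSeq i (j + 1) - updSeq i j =
          2 ^ Nat.nth (fun b => rmb i < b ∧ i.testBit b = false) (j - 1) := by
  classical
  obtain ⟨m, hm⟩ : ∃ m, rmb i = m := ⟨_, rfl⟩
  rw [hm]
  set P : ℕ → Prop := fun b => m < b ∧ i.testBit b = false with hP
  set b : ℕ → ℕ := Nat.nth P with hb
  -- P is infinite
  have hinf : (setOf P).Infinite := by
    apply Set.Infinite.mono (s := Set.Ici (max (m + 1) (i + 1)))
    · intro t ht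
      simp only [Set.mem_Ici, le_max_iff, max_le_iff] at ht
      constructor
      · omega
      · apply Nat.testBit_eq_false_of_lt
        calc i < 2 ^ i := Nat.lt_two_pow_self
        _ ≤ 2 ^ t := Nat.pow_le_pow_right (by norm_num) (by omega)
    · exact Set.Ici_infinite _
  have hbmem : ∀ k, P (b k) := fun k => Nat.nth_mem_of_infinite hinf k
  have hbmono : StrictMono b := Nat.nth_strictMono hinf
  -- decompose i = 2^m * odd
  have hdvd : 2 ^ m ∣ i := by rw [← hm]; exact pow_padicValNat_dvd
  obtain ⟨o, hio⟩ := hdvd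
  have ho : Odd o := by
    rcases Nat.even_or_odd o with he | ho
    · exfalso
      obtain ⟨o', rfl⟩ := he
      have hd : 2 ^ (m + 1) ∣ i := ⟨o', by rw [hio]; ring⟩
      rw [← hm] at hd
      exact pow_succ_padicValNat_not_dvd hi.ne' hd
    · exact ho
  have hbit_lt : ∀ t, t < m → i.testBit t = false := by
    intro t ht
    rw [hio, Nat.testBit_two_pow_mul]
    simp [Nat.not_le_of_lt ht]
  have hbit_m : i.testBit m = true := by
    rw [hio, Nat.testBit_two_pow_mul]
    simp [Nat.testBit_zero, Nat.odd_iff.mp ho]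
  have hPnth : ∀ t, P t → ∃ k, b k = t := by
    intro t ht
    exact ⟨Nat.count P t, Nat.nth_count ht⟩
  have hbits_true : ∀ t, m < t → (∀ k, b k ≠ t) → i.testBit t = true := by
    intro t ht hk
    by_contra h
    obtain ⟨k, hk'⟩ := hPnth t ⟨ht, by simpa using h⟩
    exact hk k hk'
  have hmb : ∀ k, m < b k := fun k => (hbmem k).1
  -- key invariant
  have hkey : ∀ k, updSeq i (k + 1) = 2 ^ b k + 2 ^ (b k + 1) * (i / 2 ^ (b k + 1)) := by
    intro k
    induction k with
    | zero =>
      have h0 : m < b 0 := hmb 0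
      have hmod : i % 2 ^ (b 0 + 1) = 2 ^ b 0 - 2 ^ m := by
        have h2 : 2 ^ b 0 - 2 ^ m = 2 ^ m * (2 ^ (b 0 - m) - 1) := by
          rw [Nat.mul_sub, mul_one, ← pow_add]
          congr 2
          omega
        apply Nat.eq_of_testBit_eq
        intro t
        rw [h2, Nat.testBit_two_pow_mul]
        simp only [Nat.testBit_mod_two_pow, Nat.testBit_two_pow_sub_one]
        rcases lt_trichotomy t m with h1 | rfl | h1
        · simp [hbit_lt t h1, show ¬ (m ≤ t) by omega]
        · simp [hbit_m]; omega
        · rcases lt_trichotomy t (b 0) with h2' | rfl | h2'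
          · have hbt : i.testBit t = true := by
              apply hbits_true t h1
              intro k hk
              have : b 0 ≤ b k := hbmono.monotone (Nat.zero_le k)
              omega
            simp [hbt, show t < b 0 + 1 by omega, show m ≤ t by omega,
              show t - m < b 0 - m by omega]
          · simp [(hbmem 0).2, show ¬ (b 0 - m < b 0 - m) by omega]
          · simp [show ¬ (t < b 0 + 1) by omega, show ¬ (t - m < b 0 - m) by omega]
      have h1 : updSeq i (0 + 1) = i + 2 ^ m := by
        simp [updSeq, updStep, hm]
      have h2 : 2 ^ (b 0 + 1) * (i / 2 ^ (b 0 + 1)) + i % 2 ^ (b 0 + 1) = i :=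
        Nat.div_add_mod i _
      have h3 : 2 ^ m ≤ 2 ^ b 0 := Nat.pow_le_pow_right (by norm_num) h0.le
      omega
    | succ k ih =>
      set B := b k with hB
      set B' := b (k + 1) with hB'
      have hlt : B < B' := hbmono (Nat.lt_succ_self k)
      set q := i / 2 ^ (B + 1) with hq
      set d := B' - B - 1 with hd
      have hB'd : B' = B + 1 + d := by omega
      have hqmod : q % 2 ^ (d + 1) = 2 ^ d - 1 := by
        apply Nat.eq_of_testBit_eq
        intro t
        simp only [Nat.testBit_mod_two_pow, Nat.testBit_two_pow_sub_one, hq, testBit_div_pow]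
        rcases lt_trichotomy t d with h1 | rfl | h1
        · have hbt : i.testBit (B + 1 + t) = true := by
            apply hbits_true _ (by have := hmb k; omega)
            intro k' hk'
            have h' : B < b k' := by omega
            have h'' : b k' < B' := by omega
            rw [hbmono.lt_iff_lt] at h' h''
            omega
          simp [hbt, show t < d + 1 by omega, h1]
        · rw [show B + 1 + d = B' by omega]
          simp [(hbmem (k + 1)).2, show ¬ (d < d) by omega]
          exact (hbmem (k + 1)).2
        · simp [show ¬ (t < d + 1) by omega, show ¬ (t < d) by omega]
      have hQ : q / 2 ^ (d + 1) = i / 2 ^ (B' + 1) := by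
        rw [hq, Nat.div_div_eq_div_mul, ← pow_add, hB'd]
        ring_nf
      have hstep : updSeq i (k + 1 + 1) = updSeq i (k + 1) + 2 ^ rmb (updSeq i (k + 1)) := by
        simp [updSeq, Function.iterate_succ_apply', updStep]
      have hrmb : rmb (updSeq i (k + 1)) = B := by
        rw [ih]
        have h4 : 2 ^ B + 2 ^ (B + 1) * q = 2 ^ B * (2 * q + 1) := by ring
        rw [h4, rmb_pow_mul _ _ ⟨q, by ring⟩]
      rw [hstep, hrmb, ih]
      have hq1 : q + 1 = 2 ^ (d + 1) * (q / 2 ^ (d + 1)) + 2 ^ d := by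
        have h5 := Nat.div_add_mod q (2 ^ (d + 1))
        have h6 : (1 : ℕ) ≤ 2 ^ d := Nat.one_le_two_pow
        have h7 : (2 : ℕ) ^ (d + 1) = 2 * 2 ^ d := by ring
        omega
      rw [hQ] at hq1
      have h8 : 2 ^ B + 2 ^ (B + 1) * q + 2 ^ B = 2 ^ (B + 1) * (q + 1) := by ring
      rw [h8, hq1, hB'd]
      ring
  refine ⟨by simp [updSeq, updStep, hm], ?_⟩
  intro j hj
  obtain ⟨k, rfl⟩ : ∃ k, j = k + 1 := ⟨j - 1, by omega⟩
  have hstep : updSeq i (k + 1 + 1) = updSeq i (k + 1) + 2 ^ rmb (updSeq i (k + 1)) := by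
    simp [updSeq, Function.iterate_succ_apply', updStep]
  have hrmb : rmb (updSeq i (k + 1)) = b k := by
    rw [hkey k]
    have h4 : 2 ^ b k + 2 ^ (b k + 1) * (i / 2 ^ (b k + 1)) =
        2 ^ b k * (2 * (i / 2 ^ (b k + 1)) + 1) := by ring
    rw [h4, rmb_pow_mul _ _ ⟨_, by ring⟩]
  rw [hstep, hrmb]
  simp [hb]
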